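/- Suppose Φ : ℝ^L → H is differentiable, and for fixed v ∈ ℝ^L let ∇₁κ(u,v) denote the gradient at u of the map w ↦ ⟨Φ(w), Φ(v)⟩_H. Then, with x_1,…,x_T and all e_m for m ≠ n held fixed, the function e_n ↦ J (the kernel-NMF cost) is differentiable and its gradient equals ∑_{t=1}^T a_{nt} ( −∇₁κ(e_n, x_t) + ∑_{m=1}^N a_{mt} ∇₁κ(e_n, e_m) ). -/

import Mathlib

open RealInnerProductSpace Finset

/-- Gradient of the kernel-NMF cost with respect to the endmember `e_n`:
`∇_{e_n} J = ∑_t a_{nt} ( −∇₁κ(e_n,x_t) + ∑_m a_{mt} ∇₁κ(e_n,e_m) )`,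
where `∇₁κ(u,v)` is the gradient at `u` of `w ↦ ⟪Φ(w),Φ(v)⟫`. -/
theorem kernelNMF_cost_gradient_endmember
    {L N T : ℕ} {H : Type*} [NormedAddCommGroup H] [InnerProductSpace ℝ H]
    (Φ : EuclideanSpace ℝ (Fin L) → H) (hΦ : Differentiable ℝ Φ)
    (x : Fin T → EuclideanSpace ℝ (Fin L))
    (e : Fin N → EuclideanSpace ℝ (Fin L))
    (a : Fin N → Fin T → ℝ) (n : Fin N)
    (gradκ : EuclideanSpace ℝ (Fin L) → EuclideanSpace ℝ (Fin L) →
      EuclideanSpace ℝ (Fin L))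
    (hgradκ : ∀ u v, HasGradientAt (fun w => ⟪Φ w, Φ v⟫) (gradκ u v) u) :
    HasGradientAt
      (fun en : EuclideanSpace ℝ (Fin L) =>
        (1/2 : ℝ) * ∑ t, ‖Φ (x t) - ∑ m, a m t • Φ (Function.update e n en m)‖^2)
      (∑ t, a n t • (-gradκ (e n) (x t) + ∑ m, a m t • gradκ (e n) (e m)))
      (e n) := by
  classical
  set Φ' := fderiv ℝ Φ (e n) with hΦ'def
  -- key: the gradient identity for fixed second argument
  have key : ∀ v (h : EuclideanSpace ℝ (Fin L)),
      ⟪gradκ (e n) v, h⟫ = ⟪Φ' h, Φ v⟫ := by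
    intro v h
    have h1 : HasFDerivAt (fun w => ⟪Φ w, Φ v⟫)
        ((InnerProductSpace.toDual ℝ _) (gradκ (e n) v)) (e n) :=
      (hgradκ (e n) v).hasFDerivAt
    have h2 : HasFDerivAt (fun w => ⟪Φ w, Φ v⟫)
        ((innerSL ℝ (Φ v)).comp Φ') (e n) := by
      have := (innerSL ℝ (Φ v)).hasFDerivAt.comp (e n) (hΦ (e n)).hasFDerivAt
      have hfun : (fun w => ⟪Φ w, Φ v⟫) = fun w => innerSL ℝ (Φ v) (Φ w) := by
        funext w; simp [real_inner_comm]
      rw [hfun]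
      exact this
    have heq := h1.unique h2
    calc ⟪gradκ (e n) v, h⟫
        = (InnerProductSpace.toDual ℝ _) (gradκ (e n) v) h := by
          simp [InnerProductSpace.toDual_apply_apply]
      _ = ((innerSL ℝ (Φ v)).comp Φ') h := by rw [heq]
      _ = ⟪Φ v, Φ' h⟫ := rfl
      _ = ⟪Φ' h, Φ v⟫ := real_inner_comm _ _
  set c : Fin T → H := fun t => Φ (x t) - ∑ m ∈ Finset.univ.erase n, a m t • Φ (e m)
    with hcdef
  have hrw : ∀ (en : EuclideanSpace ℝ (Fin L)) t,
      Φ (x t) - ∑ m, a m t • Φ (Function.update e n en m) = c t - a n t • Φ en := by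
    intro en t
    have hs : ∑ m, a m t • Φ (Function.update e n en m)
        = a n t • Φ en + ∑ m ∈ Finset.univ.erase n, a m t • Φ (e m) := by
      rw [← Finset.add_sum_erase _ _ (mem_univ n)]
      congr 1
      · rw [Function.update_self]
      · exact Finset.sum_congr rfl fun m hm => by
          rw [Function.update_of_ne (Finset.ne_of_mem_erase hm)]
    rw [hs, hcdef]
    abel_nf
    exact add_left_comm _ _ _
  have hFeq : (fun en : EuclideanSpace ℝ (Fin L) =>
        (1/2 : ℝ) * ∑ t, ‖Φ (x t) - ∑ m, a m t • Φ (Function.update e n en m)‖^2)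
      = fun en => (1/2 : ℝ) * ∑ t, ⟪c t - a n t • Φ en, c t - a n t • Φ en⟫ := by
    funext en
    congr 1
    refine Finset.sum_congr rfl fun t _ => ?_
    rw [hrw en t, real_inner_self_eq_norm_sq]
  rw [hFeq]
  have hG : ∀ t : Fin T, HasFDerivAt (fun en : EuclideanSpace ℝ (Fin L) =>
      c t - a n t • Φ en) (-(a n t • Φ')) (e n) := fun t =>
    (((hΦ (e n)).hasFDerivAt.const_smul (a n t)).const_sub (c t))
  have hF : HasFDerivAt (fun en : EuclideanSpace ℝ (Fin L) =>
      (1/2 : ℝ) * ∑ t, ⟪c t - a n t • Φ en, c t - a n t • Φ en⟫)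
      ((1/2 : ℝ) • ∑ t, (fderivInnerCLM ℝ (c t - a n t • Φ (e n), c t - a n t • Φ (e n))).comp
        ((-(a n t • Φ')).prod (-(a n t • Φ')))) (e n) := by
    exact (HasFDerivAt.fun_sum fun t _ => ((hG t).inner ℝ (hG t))).const_mul _
  have hD : ((1/2 : ℝ) • ∑ t, (fderivInnerCLM ℝ (c t - a n t • Φ (e n), c t - a n t • Φ (e n))).comp
        ((-(a n t • Φ')).prod (-(a n t • Φ'))))
      = (InnerProductSpace.toDual ℝ _)
        (∑ t, a n t • (-gradκ (e n) (x t) + ∑ m, a m t • gradκ (e n) (e m))) := by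
    ext h
    simp only [ContinuousLinearMap.smul_apply, ContinuousLinearMap.coe_sum', Finset.sum_apply,
      ContinuousLinearMap.coe_comp', Function.comp_apply, ContinuousLinearMap.prod_apply,
      ContinuousLinearMap.neg_apply, ContinuousLinearMap.coe_smul', Pi.smul_apply,
      fderivInnerCLM_apply, InnerProductSpace.toDual_apply_apply, hcdef,
      sum_inner, inner_sum, inner_sub_left, inner_sub_right, inner_add_left, inner_neg_left,
      inner_neg_right, real_inner_smul_left, real_inner_smul_right, smul_eq_mul]
    simp only [real_inner_comm (Φ' h)]
    rw [Finset.mul_sum]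
    refine Finset.sum_congr rfl fun t _ => ?_
    simp only [key]
    rw [← Finset.add_sum_erase _ (fun m => a m t * ⟪Φ' h, Φ (e m)⟫) (mem_univ n)]
    have hS1 : ∑ m ∈ Finset.univ.erase n, a n t * (a m t * ⟪Φ' h, Φ (e m)⟫)
        = a n t * ∑ m ∈ Finset.univ.erase n, a m t * ⟪Φ' h, Φ (e m)⟫ := by
      rw [Finset.mul_sum]
    have hS2 : ∑ m ∈ Finset.univ.erase n, -(a m t * (a n t * ⟪Φ' h, Φ (e m)⟫))
        = -(a n t * ∑ m ∈ Finset.univ.erase n, a m t * ⟪Φ' h, Φ (e m)⟫) := by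
      rw [Finset.sum_neg_distrib, Finset.mul_sum]
      congr 1
      exact Finset.sum_congr rfl fun _ _ => by ring
    rw [hS1, hS2]
    ring
  rw [hasGradientAt_iff_hasFDerivAt]
  exact hD ▸ hF
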